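/- Let m and n be coprime integers with m > 1 and n > 1, let q ∈ ℤ[t] be the polynomial satisfying (1 - t)(1 - t^{mn}) = q(t) · (1 - t^m)(1 - t^n), and regard q as an element of the Laurent polynomial ring ℤ[t^{±1}]. Then the image of t^n - t^m in the quotient ring ℤ[t^{±1}]/(q) is a unit. -/

import Mathlib

open Polynomial LaurentPolynomial

set_option maxHeartbeats 1000000 in
set_option synthInstance.maxHeartbeats 400000 in
/-- Let `m, n > 1` be coprime and let `q ∈ ℤ[t]` satisfy
`(1 - t)(1 - t^(mn)) = q(t) (1 - t^m)(1 - t^n)`; regard `q` as a Laurent polynomial.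
Then the image of `t^n - t^m` in `ℤ[t^{±1}]/(q)` is a unit. -/
theorem stmt_7 (m n : ℕ) (hm : 1 < m) (hn : 1 < n) (hmn : Nat.Coprime m n)
    (q : Polynomial ℤ)
    (hq : (1 - X) * (1 - X ^ (m * n)) = q * ((1 - X ^ m) * (1 - X ^ n))) :
    IsUnit (Ideal.Quotient.mk (Ideal.span {Polynomial.toLaurent q})
      (T (n : ℤ) - T (m : ℤ))) := by
  set f := Ideal.Quotient.mk (Ideal.span {Polynomial.toLaurent q}) with hf
  have gm := geom_sum_mul (X : ℤ[X]) m
  have gn := geom_sum_mul (X : ℤ[X]) n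
  have gmn := geom_sum_mul (X : ℤ[X]) (m * n)
  have hX : ((X : ℤ[X]) - 1) ≠ 0 := by
    simpa using (X_sub_C_ne_zero (1 : ℤ))
  -- cancel (X-1)^2 from hq
  have h2 : (∑ i ∈ Finset.range (m * n), (X : ℤ[X]) ^ i)
      = q * ((∑ i ∈ Finset.range m, (X : ℤ[X]) ^ i) * (∑ i ∈ Finset.range n, (X : ℤ[X]) ^ i)) := by
    apply mul_right_cancel₀ (pow_ne_zero 2 hX)
    linear_combination (X - 1 : ℤ[X]) * gmn + hq
      - q * ((X : ℤ[X]) ^ n - 1) * gm - q * (∑ i ∈ Finset.range m, (X : ℤ[X]) ^ i) * (X - 1) * gn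
  -- q(1) = 1
  have hq1 : q.eval 1 = 1 := by
    have := congrArg (Polynomial.eval (1 : ℤ)) h2
    simp [eval_finset_sum] at this
    have hmn0 : (m : ℤ) * n ≠ 0 := by positivity
    have : (m : ℤ) * n * 1 = (m : ℤ) * n * q.eval 1 := by linarith
    exact (mul_left_cancel₀ hmn0 this).symm
  -- q divides X^(mn) - 1
  have hdvdmn : q ∣ (X : ℤ[X]) ^ (m * n) - 1 :=
    ⟨(∑ i ∈ Finset.range m, (X : ℤ[X]) ^ i) * (∑ i ∈ Finset.range n, (X : ℤ[X]) ^ i) * (X - 1),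
      by linear_combination -gmn + (X - 1 : ℤ[X]) * h2⟩
  -- X - 1 divides q - 1
  have hdvd1 : ((X : ℤ[X]) - 1) ∣ q - 1 := by
    have h := X_sub_C_dvd_sub_C_eval (a := (1 : ℤ)) (p := q)
    rwa [hq1, map_one] at h
  have hfq : f (toLaurent q) = 0 :=
    Ideal.Quotient.eq_zero_iff_mem.2 (Ideal.subset_span rfl)
  set τ : ℤ[T;T⁻¹] ⧸ Ideal.span {Polynomial.toLaurent q} := f (toLaurent X) with hτ
  have key0 : ∀ p : ℤ[X], q ∣ p → f (toLaurent p) = 0 := by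
    rintro p ⟨c, rfl⟩
    rw [map_mul, map_mul, hfq, zero_mul]
  have hτmn : τ ^ (m * n) = 1 := by
    have := key0 _ hdvdmn
    rw [map_sub, map_pow, map_one, map_sub, map_pow, map_one, sub_eq_zero] at this
    exact this
  have hτu : IsUnit τ := by
    apply IsUnit.of_mul_eq_one (τ ^ (m * n - 1))
    rw [← pow_succ']
    have hmn1 : 1 < m * n := by nlinarith
    have heq : m * n - 1 + 1 = m * n := by omega
    rw [heq, hτmn]
  have hτ1 : IsUnit (τ - 1) := by
    obtain ⟨c, hc⟩ := hdvd1
    have h : f (toLaurent (q - 1)) = f (toLaurent ((X - 1) * c)) := by rw [hc]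
    rw [map_sub, map_sub, map_one, map_one, map_mul, map_mul, map_sub, map_sub,
      map_one, map_one, hfq, zero_sub, ← hτ] at h
    refine isUnit_of_dvd_unit ⟨f (toLaurent c), h⟩ (IsUnit.neg (isUnit_one (M := ℤ[T;T⁻¹] ⧸ Ideal.span {Polynomial.toLaurent q})))
  -- key: for k coprime to mn, τ^k - 1 is a unit
  have key : ∀ k : ℕ, 0 < k → Nat.Coprime k (m * n) → IsUnit (τ ^ k - 1) := by
    intro k hk hkc
    have hN : 1 < m * n := by nlinarith
    have heuler := Nat.ModEq.pow_totient hkc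
    have hφ : 0 < Nat.totient (m * n) := Nat.totient_pos.2 (by omega)
    have hk1 : 1 ≤ k ^ Nat.totient (m * n) := Nat.one_le_pow _ _ hk
    have hdvd : (m * n) ∣ k ^ Nat.totient (m * n) - 1 :=
      (Nat.modEq_iff_dvd' hk1).1 heuler.symm
    obtain ⟨s, hs⟩ := hdvd
    have hks : k ^ Nat.totient (m * n) = m * n * s + 1 := by omega
    have hpow : τ ^ (k ^ Nat.totient (m * n)) = τ := by
      rw [hks, pow_add, pow_mul, hτmn, one_pow, one_mul, pow_one]
    have hdvd2 : τ ^ k - 1 ∣ τ ^ (k ^ Nat.totient (m * n)) - 1 := by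
      have h := sub_dvd_pow_sub_pow (τ ^ k) 1 (k ^ (Nat.totient (m * n) - 1))
      rw [one_pow, ← pow_mul] at h
      have : k * k ^ (Nat.totient (m * n) - 1) = k ^ Nat.totient (m * n) := by
        rw [← pow_succ']; congr 1; omega
      rwa [this] at h
    rw [hpow] at hdvd2
    exact isUnit_of_dvd_unit hdvd2 hτ1
  -- finish
  have hTn : f (T (n : ℤ)) = τ ^ n := by
    rw [hτ, ← map_pow, ← map_pow, toLaurent_X_pow]
  have hTm : f (T (m : ℤ)) = τ ^ m := by
    rw [hτ, ← map_pow, ← map_pow, toLaurent_X_pow]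
  rw [map_sub, hTn, hTm]
  have hne : m ≠ n := by
    intro h; subst h; simp [Nat.Coprime, Nat.gcd_self] at hmn; omega
  rcases lt_or_gt_of_ne hne with h | h
  · -- m < n
    have hco : Nat.Coprime (n - m) (m * n) := by
      have h1 : Nat.Coprime (n - m) m := (Nat.coprime_sub_self_left h.le).2 hmn.symm
      have h2' : Nat.Coprime (n - m) n := by
        have h3 := Nat.coprime_self_add_right.2 h1
        rwa [show n - m + m = n from by omega] at h3
      exact Nat.Coprime.mul_right h1 h2'
    have : τ ^ n - τ ^ m = τ ^ m * (τ ^ (n - m) - 1) := by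
      rw [mul_sub, mul_one, ← pow_add]
      congr 2
      omega
    rw [this]
    exact (hτu.pow m).mul (key (n - m) (by omega) hco)
  · -- n < m
    have hco : Nat.Coprime (m - n) (m * n) := by
      have h1 : Nat.Coprime (m - n) n := (Nat.coprime_sub_self_left h.le).2 hmn
      have h2' : Nat.Coprime (m - n) m := by
        have h3 := Nat.coprime_self_add_right.2 h1
        rwa [show m - n + n = m from by omega] at h3
      exact Nat.Coprime.mul_right h2' h1
    have : τ ^ n - τ ^ m = -(τ ^ n * (τ ^ (m - n) - 1)) := by
      rw [mul_sub, mul_one, ← pow_add, neg_sub]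
      congr 2
      omega
    rw [this]
    exact ((hτu.pow n).mul (key (m - n) (by omega) hco)).neg
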